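/- Let W be a finite type with decidable equality and let G be a simple graph on Fin 2 × W with at least one edge such that for all a, b : Fin 2 and u, w : W, G.Adj (a,u) (b,w) → G.Adj (a,w) (b,u) (i.e., the graph is invariant under the partial transpose acting on the second factor). Then the graph Laplacian state ρ_G is separable (as a state on ℂ² ⊗ ℂ^W). -/

import Mathlib

open Matrix Kronecker ComplexOrder

noncomputable section

/-- A density matrix: positive semidefinite with trace 1. -/
def IsDensityMatrix {n : Type*} [Fintype n] (ρ : Matrix n n ℂ) : Prop :=
  ρ.PosSemidef ∧ ρ.trace = 1

/-- Separability of a bipartite density matrix: a convex combination of Kronecker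
products of density matrices of the subsystems. -/
def Separable {α β : Type*} [Fintype α] [Fintype β]
    (ρ : Matrix (α × β) (α × β) ℂ) : Prop :=
  ∃ (n : ℕ) (p : Fin n → ℝ) (σ : Fin n → Matrix α α ℂ) (τ : Fin n → Matrix β β ℂ),
    (∀ k, 0 ≤ p k) ∧ (∑ k, p k = 1) ∧
    (∀ k, (σ k).PosSemidef ∧ (σ k).trace = 1) ∧
    (∀ k, (τ k).PosSemidef ∧ (τ k).trace = 1) ∧
    ρ = ∑ k, (p k : ℂ) • (σ k ⊗ₖ τ k)

/-- The `(x,y)`-block of a bipartite matrix. -/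
def matBlock {α β : Type*} (ρ : Matrix (α × β) (α × β) ℂ) (x y : α) :
    Matrix β β ℂ :=
  Matrix.of fun j l => ρ (x, j) (y, l)

/-- The graph Laplacian quantum state of a simple graph. -/
def lapState {V : Type*} [Fintype V] [DecidableEq V] (G : SimpleGraph V)
    [DecidableRel G.Adj] : Matrix V V ℂ :=
  ((2 * G.edgeFinset.card : ℂ))⁻¹ • G.lapMatrix ℂ

section Aux

variable {n : Type*} [Fintype n] [DecidableEq n]

lemma psd_vecMulVec (v : n → ℂ) : (vecMulVec v (star v)).PosSemidef := by
  exact posSemidef_vecMulVec_self_star v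

lemma psd_smul_real {M : Matrix n n ℂ} (hM : M.PosSemidef) {c : ℝ} (hc : 0 ≤ c) :
    ((c : ℂ) • M).PosSemidef := by
  have h0 : (0:ℂ) ≤ (c:ℂ) := by exact_mod_cast hc
  exact hM.smul h0

lemma psd_diag_nonneg {M : Matrix n n ℂ} (hM : M.PosSemidef) (i : n) : 0 ≤ M i i := by
  exact hM.diag_nonneg

lemma psd_trace_nonneg {M : Matrix n n ℂ} (hM : M.PosSemidef) : 0 ≤ M.trace := by
  rw [Matrix.trace]
  exact Finset.sum_nonneg fun i _ => psd_diag_nonneg hM i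

lemma psd_trace_real {M : Matrix n n ℂ} (hM : M.PosSemidef) :
    ∃ r : ℝ, 0 ≤ r ∧ M.trace = (r : ℂ) := by
  have h := psd_trace_nonneg hM
  rw [Complex.nonneg_iff] at h
  exact ⟨M.trace.re, h.1, by apply Complex.ext <;> simp [← h.2]⟩

lemma psd_eq_zero_of_trace {M : Matrix n n ℂ} (hM : M.PosSemidef) (h : M.trace = 0) :
    M = 0 := by
  exact hM.trace_eq_zero_iff.mp h

end Aux

section SumLemmas

variable {W : Type*} [Fintype W] [DecidableEq W]

lemma collapse (f : W → ℂ) (j : W) :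
    ∑ u : W, (if j = u then (1:ℂ) else 0) * f u = f j := by
  simp [ite_mul, Finset.sum_ite_eq]

lemma sumQ (Q : W → W → Prop) [DecidableRel Q]
    (hsym : ∀ u w, Q u w ↔ Q w u) (t : ℂ) (j l : W) :
    (∑ u : W, ∑ w : W, (if Q u w then (1:ℂ) else 0) *
      (((if j = u then (1:ℂ) else 0) + t * (if j = w then 1 else 0)) *
       ((if l = u then (1:ℂ) else 0) + t * (if l = w then 1 else 0))))
    = (1 + t * t) * ((if j = l then (1:ℂ) else 0) * (∑ w : W, if Q j w then (1:ℂ) else 0))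
      + (t + t) * (if Q j l then 1 else 0) := by
  have inner : ∀ u : W, (∑ w : W, (if Q u w then (1:ℂ) else 0) *
      (((if j = u then (1:ℂ) else 0) + t * (if j = w then 1 else 0)) *
       ((if l = u then (1:ℂ) else 0) + t * (if l = w then 1 else 0))))
      = (if j = u then (1:ℂ) else 0) * ((if l = u then (1:ℂ) else 0)
          * (∑ w : W, if Q u w then (1:ℂ) else 0))
        + t * ((if j = u then (1:ℂ) else 0) * (if Q u l then 1 else 0))
        + t * ((if l = u then (1:ℂ) else 0) * (if Q u j then 1 else 0))
        + (t*t) * ((if l = j then (1:ℂ) else 0) * (if Q u j then 1 else 0)) := by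
    intro u
    have expand : ∀ w : W, (if Q u w then (1:ℂ) else 0) *
        (((if j = u then (1:ℂ) else 0) + t * (if j = w then 1 else 0)) *
         ((if l = u then (1:ℂ) else 0) + t * (if l = w then 1 else 0)))
        = ((if j = u then (1:ℂ) else 0) * (if l = u then 1 else 0)) * (if Q u w then 1 else 0)
          + (t * (if j = u then (1:ℂ) else 0)) * ((if l = w then (1:ℂ) else 0) * (if Q u w then 1 else 0))
          + (t * (if l = u then (1:ℂ) else 0)) * ((if j = w then (1:ℂ) else 0) * (if Q u w then 1 else 0))
          + (t*t) * ((if j = w then (1:ℂ) else 0) * ((if l = w then (1:ℂ) else 0) * (if Q u w then 1 else 0))) := by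
      intro w; ring
    rw [Finset.sum_congr rfl fun w _ => expand w]
    rw [Finset.sum_add_distrib, Finset.sum_add_distrib, Finset.sum_add_distrib,
      ← Finset.mul_sum, ← Finset.mul_sum, ← Finset.mul_sum, ← Finset.mul_sum]
    rw [collapse (fun w => (if l = w then (1:ℂ) else 0) * (if Q u w then 1 else 0)) j]
    rw [collapse (fun w => (if Q u w then (1:ℂ) else 0)) l]
    rw [collapse (fun w => (if Q u w then (1:ℂ) else 0)) j]
    ring
  rw [Finset.sum_congr rfl fun u _ => inner u]
  rw [Finset.sum_add_distrib, Finset.sum_add_distrib, Finset.sum_add_distrib,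
    ← Finset.mul_sum, ← Finset.mul_sum, ← Finset.mul_sum]
  rw [collapse (fun u => (if l = u then (1:ℂ) else 0) * (∑ w : W, if Q u w then (1:ℂ) else 0)) j]
  rw [collapse (fun u => (if Q u l then (1:ℂ) else 0)) j]
  rw [collapse (fun u => (if Q u j then (1:ℂ) else 0)) l]
  have h1 : (if Q l j then (1:ℂ) else 0) = (if Q j l then 1 else 0) :=
    if_congr (hsym l j) rfl rfl
  have h2 : (∑ u : W, if Q u j then (1:ℂ) else 0) = ∑ u : W, if Q j u then 1 else 0 :=
    Finset.sum_congr rfl fun u _ => if_congr (hsym u j) rfl rfl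
  have h3 : (if l = j then (1:ℂ) else 0) = (if j = l then 1 else 0) :=
    if_congr eq_comm rfl rfl
  have h4 : (∑ u : W, (if l = j then (1:ℂ) else 0) * (if Q u j then 1 else 0))
      = (if j = l then (1:ℂ) else 0) * ∑ w : W, if Q j w then 1 else 0 := by
    rw [← Finset.mul_sum, h3, h2]
  rw [h4, h1, h3]
  ring

end SumLemmas

section BMat

variable {W : Type*} [Fintype W] [DecidableEq W]

def nvec (t : ℂ) (p : W × W) : W → ℂ :=
  fun x => (if x = p.1 then 1 else 0) + t * (if x = p.2 then 1 else 0)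

def bmatOf (Q : W → W → Prop) [DecidableRel Q] (t : ℂ) : Matrix W W ℂ :=
  ∑ p : W × W, (if Q p.1 p.2 then (1:ℂ) else 0) • vecMulVec (nvec t p) (star (nvec t p))

lemma bmatOf_psd (Q : W → W → Prop) [DecidableRel Q] (t : ℂ) : (bmatOf Q t).PosSemidef := by
  unfold bmatOf
  refine Finset.sum_induction _ _ (fun a b ha hb => ha.add hb) Matrix.PosSemidef.zero ?_
  intro p _
  by_cases h : Q p.1 p.2
  · rw [if_pos h, one_smul]; exact psd_vecMulVec _
  · rw [if_neg h, zero_smul]; exact Matrix.PosSemidef.zero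

lemma bmatOf_apply (Q : W → W → Prop) [DecidableRel Q] {t : ℂ} (ht : star t = t)
    (hsym : ∀ u w, Q u w ↔ Q w u) (j l : W) :
    bmatOf Q t j l
    = (1 + t * t) * ((if j = l then (1:ℂ) else 0) * (∑ w : W, if Q j w then (1:ℂ) else 0))
      + (t + t) * (if Q j l then 1 else 0) := by
  have hstar : ∀ (p : W × W) (x : W), star (nvec t p) x = nvec t p x := by
    intro p x
    simp only [Pi.star_apply, nvec, star_add, star_mul', ht, apply_ite (star : ℂ → ℂ),
      star_one, star_zero, mul_comm]
  rw [← sumQ Q hsym t j l, bmatOf, Matrix.sum_apply, Fintype.sum_prod_type]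
  refine Finset.sum_congr rfl fun u _ => Finset.sum_congr rfl fun w _ => ?_
  rw [Matrix.smul_apply, vecMulVec_apply, hstar, smul_eq_mul]
  simp only [nvec]

lemma degree_expand (G : SimpleGraph (Fin 2 × W)) [DecidableRel G.Adj] (v : Fin 2 × W) :
    (G.degree v : ℂ) = (∑ w : W, if G.Adj v (0, w) then (1:ℂ) else 0)
      + ∑ w : W, if G.Adj v (1, w) then (1:ℂ) else 0 := by
  have h1 : G.degree v = ∑ x : Fin 2 × W, if G.Adj v x then 1 else 0 := by
    rw [← SimpleGraph.card_neighborFinset_eq_degree, SimpleGraph.neighborFinset_eq_filter,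
      Finset.card_filter]
  rw [h1]
  push_cast
  rw [Fintype.sum_prod_type, Fin.sum_univ_two]

end BMat

section Sep

lemma separable_of_kron_sum {α β : Type*} [Fintype α] [Fintype β] [DecidableEq α] [DecidableEq β]
    [Nonempty α] [Nonempty β]
    {ρ : Matrix (α × β) (α × β) ℂ} (n : ℕ)
    (A : Fin n → Matrix α α ℂ) (B : Fin n → Matrix β β ℂ)
    (hA : ∀ i, (A i).PosSemidef) (hB : ∀ i, (B i).PosSemidef)
    (hsum : ρ = ∑ i, A i ⊗ₖ B i) (htr : ρ.trace = 1) : Separable ρ := by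
  choose a ha0 haeq using fun i => psd_trace_real (hA i)
  choose b hb0 hbeq using fun i => psd_trace_real (hB i)
  have hcardα : (Fintype.card α : ℂ) ≠ 0 := Nat.cast_ne_zero.mpr Fintype.card_ne_zero
  have hcardβ : (Fintype.card β : ℂ) ≠ 0 := Nat.cast_ne_zero.mpr Fintype.card_ne_zero
  set Dα : Matrix α α ℂ := (((Fintype.card α : ℝ)⁻¹ : ℝ) : ℂ) • 1 with hDα
  set Dβ : Matrix β β ℂ := (((Fintype.card β : ℝ)⁻¹ : ℝ) : ℂ) • 1 with hDβ
  have hDαpsd : Dα.PosSemidef := psd_smul_real Matrix.PosSemidef.one (by positivity)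
  have hDβpsd : Dβ.PosSemidef := psd_smul_real Matrix.PosSemidef.one (by positivity)
  have hDαtr : Dα.trace = 1 := by
    rw [hDα, Matrix.trace_smul, Matrix.trace_one, smul_eq_mul]
    push_cast
    exact inv_mul_cancel₀ hcardα
  have hDβtr : Dβ.trace = 1 := by
    rw [hDβ, Matrix.trace_smul, Matrix.trace_one, smul_eq_mul]
    push_cast
    exact inv_mul_cancel₀ hcardβ
  refine ⟨n, fun i => a i * b i,
    (fun i => if h : a i = 0 then Dα else (((a i)⁻¹ : ℝ) : ℂ) • A i),
    (fun i => if h : b i = 0 then Dβ else (((b i)⁻¹ : ℝ) : ℂ) • B i),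
    fun i => mul_nonneg (ha0 i) (hb0 i), ?_, ?_, ?_, ?_⟩
  · have key : ((∑ i, a i * b i : ℝ) : ℂ) = ((1:ℝ) : ℂ) := by
      push_cast
      rw [← htr, hsum, Matrix.trace_sum]
      exact (Finset.sum_congr rfl fun i _ => by
        rw [Matrix.trace_kronecker, haeq, hbeq]).symm
    exact_mod_cast key
  · intro i
    by_cases h : a i = 0
    · simp only [dif_pos h]; exact ⟨hDαpsd, hDαtr⟩
    · simp only [dif_neg h]
      refine ⟨psd_smul_real (hA i) (inv_nonneg.mpr (ha0 i)), ?_⟩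
      rw [Matrix.trace_smul, haeq, smul_eq_mul]
      push_cast
      exact inv_mul_cancel₀ (by exact_mod_cast h)
  · intro i
    by_cases h : b i = 0
    · simp only [dif_pos h]; exact ⟨hDβpsd, hDβtr⟩
    · simp only [dif_neg h]
      refine ⟨psd_smul_real (hB i) (inv_nonneg.mpr (hb0 i)), ?_⟩
      rw [Matrix.trace_smul, hbeq, smul_eq_mul]
      push_cast
      exact inv_mul_cancel₀ (by exact_mod_cast h)
  · rw [hsum]
    refine Finset.sum_congr rfl fun i _ => ?_
    by_cases ha : a i = 0
    · have hAz : A i = 0 := psd_eq_zero_of_trace (hA i) (by rw [haeq, ha]; simp)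
      simp [hAz, ha]
    · by_cases hb : b i = 0
      · have hBz : B i = 0 := psd_eq_zero_of_trace (hB i) (by rw [hbeq, hb]; simp)
        simp [hBz, hb]
      · simp only [dif_neg ha, dif_neg hb]
        rw [Matrix.smul_kronecker, Matrix.kronecker_smul, smul_smul, smul_smul]
        have hs : ((a i * b i : ℝ) : ℂ) * (((a i)⁻¹ : ℝ) : ℂ) * (((b i)⁻¹ : ℝ) : ℂ) = 1 := by
          push_cast
          field_simp
        rw [hs, one_smul]

end Sep

set_option maxHeartbeats 1000000 in
theorem partial_transpose_invariant_graph_separable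
    {W : Type*} [Fintype W] [DecidableEq W] [Nonempty W]
    (G : SimpleGraph (Fin 2 × W)) [DecidableRel G.Adj]
    (hE : G.edgeFinset.Nonempty)
    (hAdj : ∀ (a b : Fin 2) (u w : W), G.Adj (a, u) (b, w) → G.Adj (a, w) (b, u)) :
    Separable (lapState G) := by
  haveI i00 : DecidableRel (fun u w : W => G.Adj (0,u) (0,w)) :=
    fun u w => inferInstanceAs (Decidable (G.Adj _ _))
  haveI i11 : DecidableRel (fun u w : W => G.Adj (1,u) (1,w)) :=
    fun u w => inferInstanceAs (Decidable (G.Adj _ _))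
  haveI i01 : DecidableRel (fun u w : W => G.Adj (0,u) (1,w)) :=
    fun u w => inferInstanceAs (Decidable (G.Adj _ _))
  set c : ℝ := ((2 * G.edgeFinset.card : ℝ))⁻¹ with hc
  have hc0 : 0 ≤ c := by positivity
  have hsym0 : ∀ u w : W, G.Adj (0,u) (0,w) ↔ G.Adj (0,w) (0,u) :=
    fun u w => ⟨fun h => h.symm, fun h => h.symm⟩
  have hsym1 : ∀ u w : W, G.Adj (1,u) (1,w) ↔ G.Adj (1,w) (1,u) :=
    fun u w => ⟨fun h => h.symm, fun h => h.symm⟩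
  have hsymc : ∀ u w : W, G.Adj (0,u) (1,w) ↔ G.Adj (0,w) (1,u) :=
    fun u w => ⟨hAdj 0 1 u w, hAdj 0 1 w u⟩
  have hcadj1 : ∀ j l : W, (if G.Adj (1,j) (0,l) then (1:ℂ) else 0)
      = if G.Adj (0,j) (1,l) then 1 else 0 := by
    intro j l
    exact if_congr ⟨fun h => hAdj 0 1 l j h.symm, fun h => (hAdj 0 1 j l h).symm⟩ rfl rfl
  have hcadj2 : ∀ j : W, (∑ w : W, if G.Adj (1,j) (0,w) then (1:ℂ) else 0)
      = ∑ w : W, if G.Adj (0,j) (1,w) then 1 else 0 :=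
    fun j => Finset.sum_congr rfl fun w _ => hcadj1 j w
  -- the four W-side matrices, made opaque
  obtain ⟨B0, hB0psd, hB0⟩ :
      ∃ M : Matrix W W ℂ, M.PosSemidef ∧ ∀ j l : W, M j l =
        2 * ((if j = l then (1:ℂ) else 0) * (∑ w : W, if G.Adj (0,j) (0,w) then (1:ℂ) else 0))
          - 2 * (if G.Adj (0,j) (0,l) then 1 else 0) :=
    ⟨bmatOf (fun u w => G.Adj (0,u) (0,w)) (-1), bmatOf_psd _ _,
      fun j l => by rw [bmatOf_apply _ (by norm_num) hsym0 j l]; ring⟩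
  obtain ⟨B1, hB1psd, hB1⟩ :
      ∃ M : Matrix W W ℂ, M.PosSemidef ∧ ∀ j l : W, M j l =
        2 * ((if j = l then (1:ℂ) else 0) * (∑ w : W, if G.Adj (1,j) (1,w) then (1:ℂ) else 0))
          - 2 * (if G.Adj (1,j) (1,l) then 1 else 0) :=
    ⟨bmatOf (fun u w => G.Adj (1,u) (1,w)) (-1), bmatOf_psd _ _,
      fun j l => by rw [bmatOf_apply _ (by norm_num) hsym1 j l]; ring⟩
  obtain ⟨B2, hB2psd, hB2⟩ :
      ∃ M : Matrix W W ℂ, M.PosSemidef ∧ ∀ j l : W, M j l =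
        2 * ((if j = l then (1:ℂ) else 0) * (∑ w : W, if G.Adj (0,j) (1,w) then (1:ℂ) else 0))
          + 2 * (if G.Adj (0,j) (1,l) then 1 else 0) :=
    ⟨bmatOf (fun u w => G.Adj (0,u) (1,w)) 1, bmatOf_psd _ _,
      fun j l => by rw [bmatOf_apply _ (by norm_num) hsymc j l]; ring⟩
  obtain ⟨B3, hB3psd, hB3⟩ :
      ∃ M : Matrix W W ℂ, M.PosSemidef ∧ ∀ j l : W, M j l =
        2 * ((if j = l then (1:ℂ) else 0) * (∑ w : W, if G.Adj (0,j) (1,w) then (1:ℂ) else 0))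
          - 2 * (if G.Adj (0,j) (1,l) then 1 else 0) :=
    ⟨bmatOf (fun u w => G.Adj (0,u) (1,w)) (-1), bmatOf_psd _ _,
      fun j l => by rw [bmatOf_apply _ (by norm_num) hsymc j l]; ring⟩
  -- the four Fin-2-side matrices, made opaque
  obtain ⟨A0, hA0psd, hA000, hA001, hA010, hA011⟩ :
      ∃ M : Matrix (Fin 2) (Fin 2) ℂ, M.PosSemidef ∧ M 0 0 = ((c/2 : ℝ) : ℂ) ∧
        M 0 1 = 0 ∧ M 1 0 = 0 ∧ M 1 1 = 0 :=
    ⟨((c/2 : ℝ) : ℂ) • vecMulVec ![1,0] (star ![1,0]),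
      psd_smul_real (psd_vecMulVec _) (by positivity),
      by simp [vecMulVec_apply, -cons_vecMulVec], by simp [vecMulVec_apply, -cons_vecMulVec], by simp [vecMulVec_apply, -cons_vecMulVec],
      by simp [vecMulVec_apply, -cons_vecMulVec]⟩
  obtain ⟨A1, hA1psd, hA100, hA101, hA110, hA111⟩ :
      ∃ M : Matrix (Fin 2) (Fin 2) ℂ, M.PosSemidef ∧ M 0 0 = 0 ∧
        M 0 1 = 0 ∧ M 1 0 = 0 ∧ M 1 1 = ((c/2 : ℝ) : ℂ) :=
    ⟨((c/2 : ℝ) : ℂ) • vecMulVec ![0,1] (star ![0,1]),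
      psd_smul_real (psd_vecMulVec _) (by positivity),
      by simp [vecMulVec_apply, -cons_vecMulVec], by simp [vecMulVec_apply, -cons_vecMulVec], by simp [vecMulVec_apply, -cons_vecMulVec],
      by simp [vecMulVec_apply, -cons_vecMulVec]⟩
  obtain ⟨A2, hA2psd, hA200, hA201, hA210, hA211⟩ :
      ∃ M : Matrix (Fin 2) (Fin 2) ℂ, M.PosSemidef ∧ M 0 0 = ((c/4 : ℝ) : ℂ) ∧
        M 0 1 = -((c/4 : ℝ) : ℂ) ∧ M 1 0 = -((c/4 : ℝ) : ℂ) ∧ M 1 1 = ((c/4 : ℝ) : ℂ) :=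
    ⟨((c/4 : ℝ) : ℂ) • vecMulVec ![1,-1] (star ![1,-1]),
      psd_smul_real (psd_vecMulVec _) (by positivity),
      by simp [vecMulVec_apply, -cons_vecMulVec], by simp [vecMulVec_apply, -cons_vecMulVec], by simp [vecMulVec_apply, -cons_vecMulVec],
      by simp [vecMulVec_apply, -cons_vecMulVec]⟩
  obtain ⟨A3, hA3psd, hA300, hA301, hA310, hA311⟩ :
      ∃ M : Matrix (Fin 2) (Fin 2) ℂ, M.PosSemidef ∧ M 0 0 = ((c/4 : ℝ) : ℂ) ∧
        M 0 1 = ((c/4 : ℝ) : ℂ) ∧ M 1 0 = ((c/4 : ℝ) : ℂ) ∧ M 1 1 = ((c/4 : ℝ) : ℂ) :=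
    ⟨((c/4 : ℝ) : ℂ) • vecMulVec ![1,1] (star ![1,1]),
      psd_smul_real (psd_vecMulVec _) (by positivity),
      by simp [vecMulVec_apply, -cons_vecMulVec], by simp [vecMulVec_apply, -cons_vecMulVec], by simp [vecMulVec_apply, -cons_vecMulVec],
      by simp [vecMulVec_apply, -cons_vecMulVec]⟩
  have hEcard : (G.edgeFinset.card : ℂ) ≠ 0 := Nat.cast_ne_zero.mpr (Finset.card_pos.mpr hE).ne'
  have hEne : (2 * (G.edgeFinset.card : ℂ)) ≠ 0 := mul_ne_zero two_ne_zero hEcard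
  have htrL : (G.lapMatrix ℂ).trace = 2 * (G.edgeFinset.card : ℂ) := by
    rw [SimpleGraph.lapMatrix, Matrix.trace_sub, SimpleGraph.trace_adjMatrix, sub_zero,
      SimpleGraph.degMatrix, Matrix.trace_diagonal, ← Nat.cast_sum,
      SimpleGraph.sum_degrees_eq_twice_card_edges]
    push_cast
    ring
  have htr : (lapState G).trace = 1 := by
    rw [lapState, Matrix.trace_smul, htrL, smul_eq_mul]
    exact inv_mul_cancel₀ hEne
  have hcc : ((2 * G.edgeFinset.card : ℂ))⁻¹ = (c : ℂ) := by
    rw [hc]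
    push_cast
    ring
  have hmain : lapState G = ∑ k : Fin 4, (![A0, A1, A2, A3] k) ⊗ₖ (![B0, B1, B2, B3] k) := by
    ext x y
    obtain ⟨a, j⟩ := x
    obtain ⟨b, l⟩ := y
    rw [Matrix.sum_apply, Fin.sum_univ_four]
    simp only [Matrix.cons_val_zero, Matrix.cons_val_one, Matrix.head_cons,
      Matrix.cons_val_two, Matrix.cons_val_three, Matrix.tail_cons, kroneckerMap_apply]
    rw [lapState, hcc]
    simp only [Matrix.smul_apply, SimpleGraph.lapMatrix, Matrix.sub_apply,
      SimpleGraph.degMatrix, Matrix.diagonal_apply, SimpleGraph.adjMatrix_apply,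
      smul_eq_mul, Prod.mk.injEq]
    rw [degree_expand G (a, j), hB0 j l, hB1 j l, hB2 j l, hB3 j l]
    fin_cases a <;> fin_cases b <;>
      simp only [Fin.zero_eta, Fin.mk_one, Fin.isValue, id_eq]
    · rw [hA000, hA100, hA200, hA300]
      simp only [(by decide : ((0:Fin 2) = 0) = True), true_and, if_true]
      by_cases hjl : j = l <;> simp only [hjl, if_true, if_false] <;> push_cast <;> ring
    · rw [hA001, hA101, hA201, hA301]
      simp only [(by decide : ((0:Fin 2) = 1) = False), false_and, if_false]
      by_cases hjl : j = l <;> simp only [hjl, if_true, if_false] <;> push_cast <;> ring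
    · rw [hA010, hA110, hA210, hA310, hcadj1 j l]
      simp only [(by decide : ((1:Fin 2) = 0) = False), false_and, if_false]
      by_cases hjl : j = l <;> simp only [hjl, if_true, if_false] <;> push_cast <;> ring
    · rw [hA011, hA111, hA211, hA311, hcadj2 j]
      simp only [(by decide : ((1:Fin 2) = 1) = True), true_and, if_true]
      by_cases hjl : j = l <;> simp only [hjl, if_true, if_false] <;> push_cast <;> ring
  refine separable_of_kron_sum 4 ![A0, A1, A2, A3] ![B0, B1, B2, B3] ?_ ?_ hmain htr
  · intro k
    fin_cases k
    · exact hA0psd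
    · exact hA1psd
    · exact hA2psd
    · exact hA3psd
  · intro k
    fin_cases k
    · exact hB0psd
    · exact hB1psd
    · exact hB2psd
    · exact hB3psd
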